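/- There exists a universal constant c > 0 with the following property. For all dimensions d_x, d_y, all μ > 0 and L₀, L₁, L₂ > 0 with μ ≤ L₁, and all functions f, g : ℝ^{d_x} × ℝ^{d_y} → ℝ such that: f is L₀-Lipschitz in y; ∇f and ∇g are L₁-Lipschitz jointly in (x, y); ∇²_{xy} g and ∇²_{yy} g are L₂-Lipschitz jointly in (x, y); and g is μ-strongly convex in y with unique minimizer y*(x) := argmin_y g(x, y) attained for every x — the hyper-objective φ(x) := f(x, y*(x)) is differentiable and ∇φ is (c · L̄ · κ³)-Lipschitz, where L̄ = max{L₀, L₁, L₂} and κ = L̄/μ. -/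

import Mathlib

set_option linter.unusedSectionVars false
set_option maxHeartbeats 2000000

open scoped RealInnerProductSpace

/-- The joint variable (x, y) viewed as an element of ℝ^{dx} × ℝ^{dy} equipped with
the Euclidean (ℓ²) norm. -/
noncomputable def mk2 {dx dy : ℕ} (x : EuclideanSpace ℝ (Fin dx))
    (y : EuclideanSpace ℝ (Fin dy)) :
    WithLp 2 (EuclideanSpace ℝ (Fin dx) × EuclideanSpace ℝ (Fin dy)) :=
  (WithLp.equiv 2 _).symm (x, y)

/-- The Hessian block ∇²_{yy} g(x, y) : ℝ^{dy} →L ℝ^{dy}. -/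
noncomputable def Hyy {dx dy : ℕ}
    (g : WithLp 2 (EuclideanSpace ℝ (Fin dx) × EuclideanSpace ℝ (Fin dy)) → ℝ)
    (x : EuclideanSpace ℝ (Fin dx)) (y : EuclideanSpace ℝ (Fin dy)) :
    EuclideanSpace ℝ (Fin dy) →L[ℝ] EuclideanSpace ℝ (Fin dy) :=
  fderiv ℝ (fun y' => gradient (fun y'' => g (mk2 x y'')) y') y

/-- The Hessian block ∇²_{xy} g(x, y), realized as the derivative in x of the
partial gradient ∇_y g : ℝ^{dx} →L ℝ^{dy}. -/
noncomputable def Hxy {dx dy : ℕ}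
    (g : WithLp 2 (EuclideanSpace ℝ (Fin dx) × EuclideanSpace ℝ (Fin dy)) → ℝ)
    (x : EuclideanSpace ℝ (Fin dx)) (y : EuclideanSpace ℝ (Fin dy)) :
    EuclideanSpace ℝ (Fin dx) →L[ℝ] EuclideanSpace ℝ (Fin dy) :=
  fderiv ℝ (fun x' => gradient (fun y' => g (mk2 x' y')) y) x

open Filter Topology

noncomputable section AuxSec

variable {E F G : Type*} [NormedAddCommGroup E] [InnerProductSpace ℝ E]
  [NormedAddCommGroup F] [InnerProductSpace ℝ F]
  [NormedAddCommGroup G] [NormedSpace ℝ G]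

/-- joint point -/
def jp (x : E) (y : F) : WithLp 2 (E × F) := (WithLp.equiv 2 _).symm (x, y)

def inlL (E F : Type*) [NormedAddCommGroup E] [InnerProductSpace ℝ E]
    [NormedAddCommGroup F] [InnerProductSpace ℝ F] : E →L[ℝ] WithLp 2 (E × F) :=
  ((WithLp.prodContinuousLinearEquiv 2 ℝ E F).symm : E × F →L[ℝ] WithLp 2 (E × F)).comp
    (ContinuousLinearMap.inl ℝ E F)

def inrL (E F : Type*) [NormedAddCommGroup E] [InnerProductSpace ℝ E]
    [NormedAddCommGroup F] [InnerProductSpace ℝ F] : F →L[ℝ] WithLp 2 (E × F) :=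
  ((WithLp.prodContinuousLinearEquiv 2 ℝ E F).symm : E × F →L[ℝ] WithLp 2 (E × F)).comp
    (ContinuousLinearMap.inr ℝ E F)

def fstL (E F : Type*) [NormedAddCommGroup E] [InnerProductSpace ℝ E]
    [NormedAddCommGroup F] [InnerProductSpace ℝ F] : WithLp 2 (E × F) →L[ℝ] E :=
  (ContinuousLinearMap.fst ℝ E F).comp
    ((WithLp.prodContinuousLinearEquiv 2 ℝ E F) : WithLp 2 (E × F) →L[ℝ] E × F)

def sndL (E F : Type*) [NormedAddCommGroup E] [InnerProductSpace ℝ E]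
    [NormedAddCommGroup F] [InnerProductSpace ℝ F] : WithLp 2 (E × F) →L[ℝ] F :=
  (ContinuousLinearMap.snd ℝ E F).comp
    ((WithLp.prodContinuousLinearEquiv 2 ℝ E F) : WithLp 2 (E × F) →L[ℝ] E × F)

@[simp] lemma fstL_jp (x : E) (y : F) : fstL E F (jp x y) = x := rfl
@[simp] lemma sndL_jp (x : E) (y : F) : sndL E F (jp x y) = y := rfl
lemma fstL_apply (w : WithLp 2 (E × F)) : fstL E F w = w.fst := rfl
lemma sndL_apply (w : WithLp 2 (E × F)) : sndL E F w = w.snd := rfl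

lemma jp_eq (x : E) (y : F) : jp x y = inlL E F x + inrL E F y := by
  show ((WithLp.prodContinuousLinearEquiv 2 ℝ E F).symm) (x, y) = _
  rw [inlL, inrL]
  simp only [ContinuousLinearMap.comp_apply, ContinuousLinearMap.inl_apply,
    ContinuousLinearMap.inr_apply, ContinuousLinearEquiv.coe_coe, ← map_add]
  norm_num

lemma jp_fst_snd (w : WithLp 2 (E × F)) : jp w.fst w.snd = w := rfl

lemma jp_sub (x x' : E) (y y' : F) : jp x y - jp x' y' = jp (x - x') (y - y') := rfl

lemma sub_fst (w w' : WithLp 2 (E × F)) : (w - w').fst = w.fst - w'.fst := rfl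
lemma sub_snd (w w' : WithLp 2 (E × F)) : (w - w').snd = w.snd - w'.snd := rfl

lemma norm_jp_sq (x : E) (y : F) : ‖jp x y‖ ^ 2 = ‖x‖ ^ 2 + ‖y‖ ^ 2 := by
  exact WithLp.prod_norm_sq_eq_of_L2 (jp x y)

lemma norm_fst_le' (w : WithLp 2 (E × F)) : ‖w.fst‖ ≤ ‖w‖ := by
  have h := WithLp.prod_norm_sq_eq_of_L2 w
  nlinarith [norm_nonneg w, norm_nonneg w.fst, norm_nonneg w.snd, sq_nonneg ‖w.snd‖]

lemma norm_snd_le' (w : WithLp 2 (E × F)) : ‖w.snd‖ ≤ ‖w‖ := by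
  have h := WithLp.prod_norm_sq_eq_of_L2 w
  nlinarith [norm_nonneg w, norm_nonneg w.fst, norm_nonneg w.snd]

lemma norm_jp_le (x : E) (y : F) : ‖jp x y‖ ≤ ‖x‖ + ‖y‖ := by
  have h := norm_jp_sq x y
  nlinarith [norm_nonneg (jp x y), norm_nonneg x, norm_nonneg y,
    mul_nonneg (norm_nonneg x) (norm_nonneg y)]

@[simp] lemma norm_jp_zero_right (x : E) : ‖jp x (0 : F)‖ = ‖x‖ :=
  WithLp.norm_toLp_fst 2 E F x

@[simp] lemma norm_jp_zero_left (y : F) : ‖jp (0 : E) y‖ = ‖y‖ :=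
  WithLp.norm_toLp_snd 2 E F y

lemma norm_fstL_le : ‖fstL E F‖ ≤ 1 :=
  ContinuousLinearMap.opNorm_le_bound _ zero_le_one (fun w => by
    rw [one_mul]; exact norm_fst_le' w)

lemma norm_sndL_le : ‖sndL E F‖ ≤ 1 :=
  ContinuousLinearMap.opNorm_le_bound _ zero_le_one (fun w => by
    rw [one_mul]; exact norm_snd_le' w)

lemma norm_fderiv_le_of_lip_real {E' F' : Type*} [NormedAddCommGroup E'] [NormedSpace ℝ E']
    [NormedAddCommGroup F'] [NormedSpace ℝ F'] {f : E' → F'} {L : ℝ} (hL : 0 ≤ L)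
    (h : ∀ a b, ‖f a - f b‖ ≤ L * ‖a - b‖) (x : E') : ‖fderiv ℝ f x‖ ≤ L := by
  have hlip : LipschitzWith ⟨L, hL⟩ f :=
    LipschitzWith.of_dist_le_mul (fun a b => by
      rw [dist_eq_norm, dist_eq_norm]; exact h a b)
  exact norm_fderiv_le_of_lipschitz ℝ hlip (x₀ := x)

lemma taylor_bound {E' F' : Type*} [NormedAddCommGroup E'] [NormedSpace ℝ E']
    [NormedAddCommGroup F'] [NormedSpace ℝ F'] {f : E' → F'}
    (hf : Differentiable ℝ f) {K : ℝ} (hK : 0 ≤ K)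
    (hlip : ∀ p q, ‖fderiv ℝ f p - fderiv ℝ f q‖ ≤ K * ‖p - q‖) (p q : E') :
    ‖f q - f p - fderiv ℝ f p (q - p)‖ ≤ K * ‖q - p‖ ^ 2 := by
  have hbound : ∀ w ∈ segment ℝ p q, ‖fderiv ℝ f w - fderiv ℝ f p‖ ≤ K * ‖q - p‖ := by
    intro w hw
    obtain ⟨a, b, ha, hb, hab, rfl⟩ := hw
    have hwp : (a • p + b • q) - p = b • (q - p) := by
      have : a = 1 - b := by linarith
      rw [this]; module
    calc ‖fderiv ℝ f (a • p + b • q) - fderiv ℝ f p‖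
        ≤ K * ‖(a • p + b • q) - p‖ := hlip _ _
      _ = K * (b * ‖q - p‖) := by rw [hwp, norm_smul, Real.norm_eq_abs, abs_of_nonneg hb]
      _ ≤ K * ‖q - p‖ := by
          have hb1 : b ≤ 1 := by linarith
          have h5 : b * ‖q - p‖ ≤ ‖q - p‖ := mul_le_of_le_one_left (norm_nonneg _) hb1
          exact mul_le_mul_of_nonneg_left h5 hK
  have h2 := Convex.norm_image_sub_le_of_norm_fderiv_le' (f := f) (φ := fderiv ℝ f p)
    (fun w _ => hf w) hbound (convex_segment p q)
    (left_mem_segment ℝ p q) (right_mem_segment ℝ p q)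
  calc ‖f q - f p - fderiv ℝ f p (q - p)‖ ≤ K * ‖q - p‖ * ‖q - p‖ := h2
    _ = K * ‖q - p‖ ^ 2 := by ring

lemma coercive_fderiv_of_monotone {G : F → F} {y : F} {μ : ℝ}
    (hG : DifferentiableAt ℝ G y)
    (hmono : ∀ y₁ y₂ : F, μ * ‖y₁ - y₂‖ ^ 2 ≤ ⟪G y₁ - G y₂, y₁ - y₂⟫) (v : F) :
    μ * ‖v‖ ^ 2 ≤ ⟪fderiv ℝ G y v, v⟫ := by
  have h1 : HasDerivAt (fun t : ℝ => y + t • v) v 0 := by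
    simpa using ((hasDerivAt_id (0 : ℝ)).smul_const v).const_add y
  have hG' : HasFDerivAt G (fderiv ℝ G y) ((fun t : ℝ => y + t • v) 0) := by
    simpa using hG.hasFDerivAt
  have hline : HasDerivAt (fun t : ℝ => G (y + t • v)) (fderiv ℝ G y v) 0 :=
    hG'.comp_hasDerivAt 0 h1
  have hs := hasDerivAt_iff_tendsto_slope_zero.mp hline
  have hs' : Tendsto (fun t : ℝ => t⁻¹ • (G (y + t • v) - G y)) (𝓝[>] (0 : ℝ))
      (𝓝 (fderiv ℝ G y v)) := by
    have hmono' := hs.mono_left (nhdsWithin_mono (0 : ℝ)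
      (fun t (ht : t ∈ Set.Ioi (0:ℝ)) => ne_of_gt ht))
    exact hmono'.congr (fun t => by simp)
  have hcont : Continuous (fun w : F => ⟪w, v⟫) :=
    continuous_inner.comp (continuous_id.prodMk continuous_const)
  have hslope : Tendsto (fun t : ℝ => ⟪t⁻¹ • (G (y + t • v) - G y), v⟫)
      (𝓝[>] (0 : ℝ)) (𝓝 ⟪fderiv ℝ G y v, v⟫) := (hcont.tendsto _).comp hs'
  refine ge_of_tendsto hslope ?_
  filter_upwards [self_mem_nhdsWithin] with t ht
  have htpos : (0 : ℝ) < t := ht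
  have h := hmono (y + t • v) y
  have hyy : (y + t • v) - y = t • v := by abel
  rw [hyy] at h
  have hnorm : ‖t • v‖ ^ 2 = t ^ 2 * ‖v‖ ^ 2 := by
    rw [norm_smul, Real.norm_eq_abs, mul_pow, sq_abs]
  rw [hnorm, real_inner_smul_right] at h
  rw [real_inner_smul_left]
  have h' : μ * (t * ‖v‖ ^ 2) ≤ ⟪G (y + t • v) - G y, v⟫ :=
    (mul_le_mul_iff_of_pos_left htpos).mp (by nlinarith)
  calc μ * ‖v‖ ^ 2 = t⁻¹ * (t * (μ * ‖v‖ ^ 2)) := by field_simp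
    _ ≤ t⁻¹ * ⟪G (y + t • v) - G y, v⟫ := by
        apply mul_le_mul_of_nonneg_left _ (le_of_lt (inv_pos.mpr htpos))
        calc t * (μ * ‖v‖ ^ 2) = μ * (t * ‖v‖ ^ 2) := by ring
          _ ≤ _ := h'

lemma coercive_inverse [FiniteDimensional ℝ F] (A : F →L[ℝ] F) {μ : ℝ} (hμ : 0 < μ)
    (hcoer : ∀ v, μ * ‖v‖ ^ 2 ≤ ⟪A v, v⟫) :
    ∃ B : F →L[ℝ] F, (∀ w, A (B w) = w) ∧ (∀ v, B (A v) = v) ∧ ‖B‖ ≤ 1 / μ := by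
  have hlow : ∀ v, μ * ‖v‖ ≤ ‖A v‖ := by
    intro v
    rcases eq_or_ne v 0 with rfl | hv
    · simp
    · have h1 := hcoer v
      have h2 : ⟪A v, v⟫ ≤ ‖A v‖ * ‖v‖ := real_inner_le_norm _ _
      have hv' : 0 < ‖v‖ := norm_pos_iff.mpr hv
      nlinarith
  have hinj : Function.Injective A := by
    intro a b hab
    have h3 : μ * ‖a - b‖ ≤ ‖A (a - b)‖ := hlow _
    rw [map_sub, hab, sub_self, norm_zero] at h3
    have h4 : ‖a - b‖ ≤ 0 := by nlinarith
    exact sub_eq_zero.mp (norm_le_zero_iff.mp h4)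
  have hinj' : Function.Injective (A : F →ₗ[ℝ] F) := hinj
  have hsurj : Function.Surjective (A : F →ₗ[ℝ] F) :=
    (LinearMap.injective_iff_surjective).mp hinj'
  set e := LinearEquiv.ofBijective (A : F →ₗ[ℝ] F) ⟨hinj', hsurj⟩ with he
  refine ⟨LinearMap.toContinuousLinearMap (e.symm : F →ₗ[ℝ] F), ?_, ?_, ?_⟩
  · intro w
    simp only [LinearMap.coe_toContinuousLinearMap']
    exact e.apply_symm_apply w
  · intro v
    simp only [LinearMap.coe_toContinuousLinearMap']
    exact e.symm_apply_apply v
  · apply ContinuousLinearMap.opNorm_le_bound _ (by positivity)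
    intro w
    have hAe : A (e.symm w) = w := e.apply_symm_apply w
    have h6 := hlow (e.symm w)
    rw [hAe] at h6
    have h7 : ‖e.symm w‖ ≤ 1 / μ * ‖w‖ := by
      rw [div_mul_eq_mul_div, le_div_iff₀ hμ]; linarith
    simpa using h7

section Grad
variable [CompleteSpace E] [CompleteSpace F]

lemma inner_gradient (f : E → ℝ) (x v : E) : ⟪gradient f x, v⟫ = fderiv ℝ f x v := by
  rw [gradient, InnerProductSpace.toDual_symm_apply]

lemma gradient_sub_norm (f : E → ℝ) (p q : E) :
    ‖gradient f p - gradient f q‖ = ‖fderiv ℝ f p - fderiv ℝ f q‖ := by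
  rw [gradient, gradient, ← LinearIsometryEquiv.map_sub, LinearIsometryEquiv.norm_map]

lemma hasFDerivAt_jp_right (x : E) (y : F) :
    HasFDerivAt (fun y' : F => jp x y') (inrL E F) y := by
  have h : (fun y' : F => jp x y') = fun y' => inlL E F x + inrL E F y' :=
    funext fun y' => jp_eq x y'
  rw [h]
  exact (inrL E F).hasFDerivAt.const_add _

lemma hasFDerivAt_jp_left (x : E) (y : F) :
    HasFDerivAt (fun x' : E => jp x' y) (inlL E F) x := by
  have h : (fun x' : E => jp x' y) = fun x' => inrL E F y + inlL E F x' :=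
    funext fun x' => by rw [jp_eq, add_comm]
  rw [h]
  exact (inlL E F).hasFDerivAt.const_add _

lemma fderiv_partial_right (f : WithLp 2 (E × F) → G) {x : E} {y : F}
    (hf : DifferentiableAt ℝ f (jp x y)) :
    fderiv ℝ (fun y' => f (jp x y')) y = (fderiv ℝ f (jp x y)).comp (inrL E F) :=
  (hf.hasFDerivAt.comp y (hasFDerivAt_jp_right x y)).fderiv

lemma fderiv_partial_left (f : WithLp 2 (E × F) → G) {x : E} {y : F}
    (hf : DifferentiableAt ℝ f (jp x y)) :
    fderiv ℝ (fun x' => f (jp x' y)) x = (fderiv ℝ f (jp x y)).comp (inlL E F) :=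
  (hf.hasFDerivAt.comp x (hasFDerivAt_jp_left x y)).fderiv

lemma gradient_partial_right (f : WithLp 2 (E × F) → ℝ) {x : E} {y : F}
    (hf : DifferentiableAt ℝ f (jp x y)) :
    gradient (fun y' => f (jp x y')) y = (gradient f (jp x y)).snd := by
  apply ext_inner_right ℝ
  intro v
  rw [inner_gradient, fderiv_partial_right f hf]
  have h1 : fderiv ℝ f (jp x y) (inrL E F v) = ⟪gradient f (jp x y), inrL E F v⟫ :=
    (inner_gradient f (jp x y) (inrL E F v)).symm
  have h2 : (inrL E F v).fst = 0 := rfl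
  have h3 : (inrL E F v).snd = v := rfl
  simp only [ContinuousLinearMap.comp_apply, h1, WithLp.prod_inner_apply, h2, h3,
    inner_zero_right, zero_add]
  rw [show ((inrL E F) v).ofLp.1 = (0:E) from h2, show ((inrL E F) v).ofLp.2 = v from h3,
    inner_zero_right, zero_add]; rfl

/-- The second component of the Riesz representation, as a continuous linear map on duals. -/
def sndGrad (E F : Type*) [NormedAddCommGroup E] [InnerProductSpace ℝ E]
    [NormedAddCommGroup F] [InnerProductSpace ℝ F] [CompleteSpace E] [CompleteSpace F] :
    (WithLp 2 (E × F) →L[ℝ] ℝ) →L[ℝ] F :=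
  LinearMap.mkContinuous
    { toFun := fun u => ((InnerProductSpace.toDual ℝ (WithLp 2 (E × F))).symm u).snd
      map_add' := fun u v => by
        show ((InnerProductSpace.toDual ℝ (WithLp 2 (E × F))).symm (u + v)).snd = _
        rw [map_add]; rfl
      map_smul' := fun r u => by
        show ((InnerProductSpace.toDual ℝ (WithLp 2 (E × F))).symm (r • u)).snd = _
        rw [LinearIsometryEquiv.map_smulₛₗ]
        simp only [starRingEnd_apply, star_trivial, RingHom.id_apply]
        rfl }
    1 (fun u => by
      rw [one_mul]
      refine le_trans (norm_snd_le' _) ?_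
      rw [LinearIsometryEquiv.norm_map])

lemma sndGrad_fderiv (g : WithLp 2 (E × F) → ℝ) (w : WithLp 2 (E × F)) :
    sndGrad E F (fderiv ℝ g w) = (gradient g w).snd := rfl

end Grad
end AuxSec

/-- the hyper-objective φ(x) = f(x, y*(x)) has a (c·L̄·κ³)-Lipschitz
gradient for a universal constant c. -/
theorem stmt_15 :
    ∃ c : ℝ, 0 < c ∧
      ∀ (dx dy : ℕ) (μ L₀ L₁ L₂ : ℝ), 0 < μ → 0 < L₀ → 0 < L₁ → 0 < L₂ → μ ≤ L₁ →
      ∀ (f g : WithLp 2 (EuclideanSpace ℝ (Fin dx) × EuclideanSpace ℝ (Fin dy)) → ℝ),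
        Differentiable ℝ f → ContDiff ℝ 2 g →
        (∀ x y₁ y₂, |f (mk2 x y₁) - f (mk2 x y₂)| ≤ L₀ * ‖y₁ - y₂‖) →
        (∀ p q, ‖gradient f p - gradient f q‖ ≤ L₁ * ‖p - q‖) →
        (∀ p q, ‖gradient g p - gradient g q‖ ≤ L₁ * ‖p - q‖) →
        (∀ x y x' y', ‖Hxy g x y - Hxy g x' y'‖ ≤ L₂ * ‖mk2 x y - mk2 x' y'‖) →
        (∀ x y x' y', ‖Hyy g x y - Hyy g x' y'‖ ≤ L₂ * ‖mk2 x y - mk2 x' y'‖) →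
        (∀ x y₁ y₂, g (mk2 x y₂) ≥ g (mk2 x y₁)
            + ⟪gradient (fun y => g (mk2 x y)) y₁, y₂ - y₁⟫ + μ / 2 * ‖y₁ - y₂‖ ^ 2) →
        ∀ ystar : EuclideanSpace ℝ (Fin dx) → EuclideanSpace ℝ (Fin dy),
          (∀ x y, g (mk2 x (ystar x)) ≤ g (mk2 x y)) →
          ∀ Lbar κ : ℝ, Lbar = max L₀ (max L₁ L₂) → κ = Lbar / μ →
            Differentiable ℝ (fun x => f (mk2 x (ystar x))) ∧
            ∀ x₁ x₂, ‖gradient (fun x => f (mk2 x (ystar x))) x₁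
                - gradient (fun x => f (mk2 x (ystar x))) x₂‖
              ≤ c * Lbar * κ ^ 3 * ‖x₁ - x₂‖ := by

  refine ⟨100, by norm_num, ?_⟩
  intro dx dy μ L₀ L₁ L₂ hμ hL₀ hL₁ hL₂ hμL₁ f g hf hg hLf hgf hgg hHxyL hHyyL hsc
    ystar hmin Lbar κ hLbar hκ
  have hgdiff : Differentiable ℝ g := hg.differentiable (by norm_num)
  -- the map Γ = ∇_y g as a function of the joint variable
  set Γ : WithLp 2 (EuclideanSpace ℝ (Fin dx) × EuclideanSpace ℝ (Fin dy)) →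
      EuclideanSpace ℝ (Fin dy) := fun w => sndGrad _ _ (fderiv ℝ g w) with hΓdef
  have hΓeq : ∀ w, Γ w = (gradient g w).snd := fun w => rfl
  have hΓdiff : Differentiable ℝ Γ := by
    rw [hΓdef]
    have h1 : ContDiff ℝ 1 (fderiv ℝ g) := hg.fderiv_right (by norm_num)
    exact (sndGrad _ _).differentiable.comp (h1.differentiable (by norm_num))
  have hΓlip : ∀ w w', ‖Γ w - Γ w'‖ ≤ L₁ * ‖w - w'‖ := by
    intro w w'
    rw [hΓeq, hΓeq, ← sub_snd]
    exact le_trans (norm_snd_le' _) (hgg w w')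
  have hgy : ∀ (x : EuclideanSpace ℝ (Fin dx)) (y : EuclideanSpace ℝ (Fin dy)),
      gradient (fun y' => g (mk2 x y')) y = Γ (jp x y) := by
    intro x y
    rw [hΓeq]
    exact gradient_partial_right g (hgdiff (jp x y))
  -- first-order optimality
  have hfoc : ∀ x, Γ (jp x (ystar x)) = 0 := by
    intro x
    rw [← hgy]
    have hloc : IsLocalMin (fun y => g (mk2 x y)) (ystar x) :=
      Filter.Eventually.of_forall (hmin x)
    have hfz : fderiv ℝ (fun y => g (mk2 x y)) (ystar x) = 0 := hloc.fderiv_eq_zero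
    rw [gradient, hfz, map_zero]
  -- strong monotonicity of ∇_y g in y
  have hmono : ∀ x y₁ y₂, μ * ‖y₁ - y₂‖ ^ 2 ≤ ⟪Γ (jp x y₁) - Γ (jp x y₂), y₁ - y₂⟫ := by
    intro x y₁ y₂
    have h1 := hsc x y₁ y₂
    have h2 := hsc x y₂ y₁
    rw [hgy] at h1 h2
    have e1 : ⟪Γ (jp x y₁), y₂ - y₁⟫ = -⟪Γ (jp x y₁), y₁ - y₂⟫ := by
      rw [← inner_neg_right]; congr 1; abel
    have e2 : ‖y₂ - y₁‖ = ‖y₁ - y₂‖ := norm_sub_rev _ _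
    rw [inner_sub_left]
    rw [e1] at h1
    rw [e2] at h2
    linarith
  -- y* is Lipschitz
  have hyslip : ∀ x₁ x₂, ‖ystar x₁ - ystar x₂‖ ≤ L₁ / μ * ‖x₁ - x₂‖ := by
    intro x₁ x₂
    have h1 := hmono x₁ (ystar x₁) (ystar x₂)
    rw [hfoc x₁] at h1
    have h2 : (0 : EuclideanSpace ℝ (Fin dy)) - Γ (jp x₁ (ystar x₂))
        = Γ (jp x₂ (ystar x₂)) - Γ (jp x₁ (ystar x₂)) := by rw [hfoc x₂]
    rw [h2] at h1
    have h3 := real_inner_le_norm (Γ (jp x₂ (ystar x₂)) - Γ (jp x₁ (ystar x₂)))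
      (ystar x₁ - ystar x₂)
    have h4 : ‖Γ (jp x₂ (ystar x₂)) - Γ (jp x₁ (ystar x₂))‖ ≤ L₁ * ‖x₁ - x₂‖ := by
      refine le_trans (hΓlip _ _) ?_
      rw [jp_sub, sub_self, norm_jp_zero_right, norm_sub_rev]
    rcases eq_or_lt_of_le (norm_nonneg (ystar x₁ - ystar x₂)) with h0 | h0
    · rw [← h0]; positivity
    · rw [div_mul_eq_mul_div, le_div_iff₀ hμ]
      have h5 : μ * ‖ystar x₁ - ystar x₂‖ ^ 2 ≤ L₁ * ‖x₁ - x₂‖ * ‖ystar x₁ - ystar x₂‖ := by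
        refine le_trans h1 (le_trans h3 ?_)
        exact mul_le_mul_of_nonneg_right h4 (norm_nonneg _)
      nlinarith
  -- coercivity of Hyy
  have hcoer : ∀ x y v, μ * ‖v‖ ^ 2 ≤ ⟪Hyy g x y v, v⟫ := by
    intro x y v
    have hfun : (fun y' => gradient (fun y'' => g (mk2 x y'')) y') = fun y' => Γ (jp x y') :=
      funext fun y' => hgy x y'
    have hGd : DifferentiableAt ℝ (fun y' => gradient (fun y'' => g (mk2 x y'')) y') y := by
      rw [hfun]
      exact (hΓdiff _).comp y (hasFDerivAt_jp_right x y).differentiableAt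
    have key : ∀ y₁ y₂ : EuclideanSpace ℝ (Fin dy), μ * ‖y₁ - y₂‖ ^ 2 ≤
        ⟪gradient (fun y'' => g (mk2 x y'')) y₁ - gradient (fun y'' => g (mk2 x y'')) y₂,
          y₁ - y₂⟫ := by
      intro y₁ y₂
      rw [hgy x y₁, hgy x y₂]
      exact hmono x y₁ y₂
    exact coercive_fderiv_of_monotone hGd key v
  -- the inverse of Hyy along the solution path
  choose Binv hB1 hB2 hB3 using fun x =>
    coercive_inverse (Hyy g x (ystar x)) hμ (fun v => hcoer x (ystar x) v)
  -- Hxy and Hyy as compositions of the joint derivative of Γ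
  have hHxyc : ∀ x y, Hxy g x y = (fderiv ℝ Γ (jp x y)).comp (inlL _ _) := by
    intro x y
    have hfun : (fun x' => gradient (fun y' => g (mk2 x' y')) y) = fun x' => Γ (jp x' y) :=
      funext fun x' => hgy x' y
    show fderiv ℝ (fun x' => gradient (fun y' => g (mk2 x' y')) y) x = _
    rw [hfun, fderiv_partial_left Γ (hΓdiff _)]
  have hHyyc : ∀ x y, Hyy g x y = (fderiv ℝ Γ (jp x y)).comp (inrL _ _) := by
    intro x y
    have hfun : (fun y' => gradient (fun y'' => g (mk2 x y'')) y') = fun y' => Γ (jp x y') :=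
      funext fun y' => hgy x y'
    show fderiv ℝ (fun y' => gradient (fun y'' => g (mk2 x y'')) y') y = _
    rw [hfun, fderiv_partial_right Γ (hΓdiff _)]
  have hsplit : ∀ x y, fderiv ℝ Γ (jp x y)
      = (Hxy g x y).comp (fstL _ _) + (Hyy g x y).comp (sndL _ _) := by
    intro x y
    rw [hHxyc x y, hHyyc x y]
    apply ContinuousLinearMap.ext
    intro u
    have hu : inlL _ _ (fstL _ _ u) + inrL _ _ (sndL _ _ u) = u := by
      rw [fstL_apply, sndL_apply, ← jp_eq]
      exact jp_fst_snd u
    simp only [ContinuousLinearMap.add_apply, ContinuousLinearMap.comp_apply]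
    rw [← map_add, hu]
  -- joint Lipschitz bound for the derivative of Γ
  have hDΓlip : ∀ w w', ‖fderiv ℝ Γ w - fderiv ℝ Γ w'‖ ≤ 2 * L₂ * ‖w - w'‖ := by
    intro w w'
    have h1 : fderiv ℝ Γ w = fderiv ℝ Γ (jp w.fst w.snd) := by rw [jp_fst_snd]
    have h2 : fderiv ℝ Γ w' = fderiv ℝ Γ (jp w'.fst w'.snd) := by rw [jp_fst_snd]
    rw [h1, h2, hsplit, hsplit]
    have e3 : (Hxy g w.fst w.snd).comp (fstL _ _) + (Hyy g w.fst w.snd).comp (sndL _ _)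
        - ((Hxy g w'.fst w'.snd).comp (fstL _ _) + (Hyy g w'.fst w'.snd).comp (sndL _ _))
        = (Hxy g w.fst w.snd - Hxy g w'.fst w'.snd).comp (fstL _ _)
          + (Hyy g w.fst w.snd - Hyy g w'.fst w'.snd).comp (sndL _ _) := by
      rw [ContinuousLinearMap.sub_comp, ContinuousLinearMap.sub_comp]
      abel
    rw [e3]
    refine le_trans (norm_add_le _ _) ?_
    have hww : mk2 w.fst w.snd - mk2 w'.fst w'.snd = w - w' := by
      show jp w.fst w.snd - jp w'.fst w'.snd = w - w'
      rw [jp_fst_snd, jp_fst_snd]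
    have b1 : ‖(Hxy g w.fst w.snd - Hxy g w'.fst w'.snd).comp (fstL (EuclideanSpace ℝ (Fin dx)) (EuclideanSpace ℝ (Fin dy)))‖ ≤ L₂ * ‖w - w'‖ := by
      refine le_trans (ContinuousLinearMap.opNorm_comp_le _ _) ?_
      have hx := hHxyL w.fst w.snd w'.fst w'.snd
      rw [hww] at hx
      refine le_trans (mul_le_mul hx norm_fstL_le (norm_nonneg _) (by positivity)) ?_
      rw [mul_one]
    have b2 : ‖(Hyy g w.fst w.snd - Hyy g w'.fst w'.snd).comp (sndL (EuclideanSpace ℝ (Fin dx)) (EuclideanSpace ℝ (Fin dy)))‖ ≤ L₂ * ‖w - w'‖ := by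
      refine le_trans (ContinuousLinearMap.opNorm_comp_le _ _) ?_
      have hx := hHyyL w.fst w.snd w'.fst w'.snd
      rw [hww] at hx
      refine le_trans (mul_le_mul hx norm_sndL_le (norm_nonneg _) (by positivity)) ?_
      rw [mul_one]
    linarith
  -- norm bound on Hxy
  have hHxnorm : ∀ x y, ‖Hxy g x y‖ ≤ L₁ := by
    intro x y
    have hfun : (fun x' => gradient (fun y' => g (mk2 x' y')) y) = fun x' => Γ (jp x' y) :=
      funext fun x' => hgy x' y
    show ‖fderiv ℝ (fun x' => gradient (fun y' => g (mk2 x' y')) y) x‖ ≤ L₁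
    rw [hfun]
    apply norm_fderiv_le_of_lip_real hL₁.le
    intro a b
    refine le_trans (hΓlip _ _) ?_
    rw [jp_sub, sub_self, norm_jp_zero_right]
  -- the implicit-function derivative candidate
  set T : EuclideanSpace ℝ (Fin dx) →
      (EuclideanSpace ℝ (Fin dx) →L[ℝ] EuclideanSpace ℝ (Fin dy)) :=
    fun x => -(Binv x).comp (Hxy g x (ystar x)) with hTdef
  have hTnorm : ∀ x, ‖T x‖ ≤ L₁ / μ := by
    intro x
    rw [hTdef]
    rw [norm_neg]
    refine le_trans (ContinuousLinearMap.opNorm_comp_le _ _) ?_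
    calc ‖Binv x‖ * ‖Hxy g x (ystar x)‖ ≤ (1 / μ) * L₁ :=
        mul_le_mul (hB3 x) (hHxnorm x (ystar x)) (norm_nonneg _) (by positivity)
      _ = L₁ / μ := by ring
  -- y* is differentiable with derivative T
  have hysd : ∀ x, HasFDerivAt ystar (T x) x := by
    intro x
    have hC₂0 : (0:ℝ) ≤ 2 * L₂ / μ * (1 + L₁ / μ) ^ 2 := by positivity
    have key : ∀ x', ‖ystar x' - ystar x - T x (x' - x)‖
        ≤ (2 * L₂ / μ * (1 + L₁ / μ) ^ 2) * ‖x' - x‖ ^ 2 := by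
      intro x'
      have h0 := taylor_bound hΓdiff (by positivity : (0:ℝ) ≤ 2 * L₂) hDΓlip
        (jp x (ystar x)) (jp x' (ystar x'))
      rw [hfoc x, hfoc x', hsplit x (ystar x), jp_sub] at h0
      simp only [ContinuousLinearMap.add_apply, ContinuousLinearMap.comp_apply,
        fstL_jp, sndL_jp, sub_self, zero_sub, norm_neg] at h0
      have e5 : ystar x' - ystar x - T x (x' - x)
          = (Binv x) (Hxy g x (ystar x) (x' - x)
              + Hyy g x (ystar x) (ystar x' - ystar x)) := by
        rw [map_add, hB2 x (ystar x' - ystar x), hTdef]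
        simp only [ContinuousLinearMap.neg_apply, ContinuousLinearMap.comp_apply]
        abel
      rw [e5]
      have h6 : ‖jp (x' - x) (ystar x' - ystar x)‖ ≤ (1 + L₁ / μ) * ‖x' - x‖ := by
        refine le_trans (norm_jp_le _ _) ?_
        have := hyslip x' x
        rw [one_add_mul]
        linarith
      have h7 : ‖jp (x' - x) (ystar x' - ystar x)‖ ^ 2 ≤ ((1 + L₁ / μ) * ‖x' - x‖) ^ 2 :=
        pow_le_pow_left₀ (norm_nonneg _) h6 2
      calc ‖(Binv x) (Hxy g x (ystar x) (x' - x) + Hyy g x (ystar x) (ystar x' - ystar x))‖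
          ≤ ‖Binv x‖ * ‖Hxy g x (ystar x) (x' - x) + Hyy g x (ystar x) (ystar x' - ystar x)‖ :=
            (Binv x).le_opNorm _
        _ ≤ (1 / μ) * (2 * L₂ * ‖jp (x' - x) (ystar x' - ystar x)‖ ^ 2) :=
            mul_le_mul (hB3 x) h0 (norm_nonneg _) (by positivity)
        _ ≤ (1 / μ) * (2 * L₂ * ((1 + L₁ / μ) * ‖x' - x‖) ^ 2) := by
            refine mul_le_mul_of_nonneg_left ?_ (by positivity)
            exact mul_le_mul_of_nonneg_left h7 (by positivity)
        _ = (2 * L₂ / μ * (1 + L₁ / μ) ^ 2) * ‖x' - x‖ ^ 2 := by ring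
    rw [hasFDerivAt_iff_isLittleO_nhds_zero]
    rw [Asymptotics.isLittleO_iff]
    intro c hc
    have hrad : (0:ℝ) < c / (2 * L₂ / μ * (1 + L₁ / μ) ^ 2 + 1) := by positivity
    filter_upwards [Metric.ball_mem_nhds (0 : EuclideanSpace ℝ (Fin dx)) hrad] with h hh
    have h8 := key (x + h)
    simp only [add_sub_cancel_left] at h8
    have hhn : ‖h‖ ≤ c / (2 * L₂ / μ * (1 + L₁ / μ) ^ 2 + 1) := by
      rw [mem_ball_iff_norm, sub_zero] at hh
      exact le_of_lt hh
    have h10 : (2 * L₂ / μ * (1 + L₁ / μ) ^ 2 + 1) * ‖h‖ ≤ c := by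
      rw [← le_div_iff₀' (by positivity)]
      exact hhn
    calc ‖ystar (x + h) - ystar x - T x h‖ ≤ (2 * L₂ / μ * (1 + L₁ / μ) ^ 2) * ‖h‖ ^ 2 := h8
      _ ≤ c * ‖h‖ := by nlinarith [norm_nonneg h]
  -- the derivative of the path x ↦ (x, y*(x))
  set J : EuclideanSpace ℝ (Fin dx) →
      (EuclideanSpace ℝ (Fin dx) →L[ℝ]
        WithLp 2 (EuclideanSpace ℝ (Fin dx) × EuclideanSpace ℝ (Fin dy))) :=
    fun x => inlL (EuclideanSpace ℝ (Fin dx)) (EuclideanSpace ℝ (Fin dy)) + (inrL (EuclideanSpace ℝ (Fin dx)) (EuclideanSpace ℝ (Fin dy))).comp (T x) with hJdef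
  have hpd : ∀ x, HasFDerivAt (fun x' => jp x' (ystar x')) (J x) x := by
    intro x
    have h1 : (fun x' => jp x' (ystar x')) =
        fun x' => inlL (EuclideanSpace ℝ (Fin dx)) (EuclideanSpace ℝ (Fin dy)) x' + inrL (EuclideanSpace ℝ (Fin dx)) (EuclideanSpace ℝ (Fin dy)) (ystar x') := funext fun x' => jp_eq _ _
    rw [h1, hJdef]
    exact (inlL (EuclideanSpace ℝ (Fin dx)) (EuclideanSpace ℝ (Fin dy))).hasFDerivAt.add ((inrL (EuclideanSpace ℝ (Fin dx)) (EuclideanSpace ℝ (Fin dy))).hasFDerivAt.comp x (hysd x))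
  have hφd : ∀ x, HasFDerivAt (fun x'' => f (mk2 x'' (ystar x'')))
      ((fderiv ℝ f (jp x (ystar x))).comp (J x)) x := by
    intro x
    exact (hf (jp x (ystar x))).hasFDerivAt.comp x (hpd x)
  constructor
  · exact fun x => (hφd x).differentiableAt
  intro x₁ x₂
  rw [gradient_sub_norm, (hφd x₁).fderiv, (hφd x₂).fderiv]
  -- abbreviations for the estimate
  have hk0 : (0:ℝ) ≤ L₁ / μ := by positivity
  have hpLip : ‖jp x₁ (ystar x₁) - jp x₂ (ystar x₂)‖ ≤ (1 + L₁ / μ) * ‖x₁ - x₂‖ := by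
    rw [jp_sub]
    refine le_trans (norm_jp_le _ _) ?_
    have := hyslip x₁ x₂
    rw [one_add_mul]
    linarith
  have hD12 : ‖fderiv ℝ f (jp x₁ (ystar x₁)) - fderiv ℝ f (jp x₂ (ystar x₂))‖
      ≤ L₁ * ((1 + L₁ / μ) * ‖x₁ - x₂‖) := by
    refine le_trans ?_ (mul_le_mul_of_nonneg_left hpLip hL₁.le)
    rw [← gradient_sub_norm]
    exact hgf _ _
  have hJnorm : ‖J x₁‖ ≤ 1 + L₁ / μ := by
    apply ContinuousLinearMap.opNorm_le_bound _ (by positivity)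
    intro v
    have hJv : J x₁ v = jp v (T x₁ v) := by
      rw [hJdef]
      simp only [ContinuousLinearMap.add_apply, ContinuousLinearMap.comp_apply]
      rw [← jp_eq]
    rw [hJv]
    refine le_trans (norm_jp_le _ _) ?_
    have h1 := (T x₁).le_opNorm v
    have h3 : ‖T x₁ v‖ ≤ L₁ / μ * ‖v‖ :=
      le_trans h1 (mul_le_mul_of_nonneg_right (hTnorm x₁) (norm_nonneg v))
    rw [one_add_mul]
    linarith
  -- Lipschitz estimate for T
  have hH12 : ‖Hxy g x₁ (ystar x₁) - Hxy g x₂ (ystar x₂)‖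
      ≤ L₂ * ((1 + L₁ / μ) * ‖x₁ - x₂‖) :=
    le_trans (hHxyL x₁ (ystar x₁) x₂ (ystar x₂))
      (mul_le_mul_of_nonneg_left hpLip hL₂.le)
  have hA12 : ‖Hyy g x₁ (ystar x₁) - Hyy g x₂ (ystar x₂)‖
      ≤ L₂ * ((1 + L₁ / μ) * ‖x₁ - x₂‖) :=
    le_trans (hHyyL x₁ (ystar x₁) x₂ (ystar x₂))
      (mul_le_mul_of_nonneg_left hpLip hL₂.le)
  have hBdiff : Binv x₁ - Binv x₂
      = ((Binv x₁).comp (Hyy g x₂ (ystar x₂) - Hyy g x₁ (ystar x₁))).comp (Binv x₂) := by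
    apply ContinuousLinearMap.ext
    intro w
    simp only [ContinuousLinearMap.sub_apply, ContinuousLinearMap.comp_apply, map_sub]
    rw [hB1 x₂ w, hB2 x₁ (Binv x₂ w)]
  have hB12 : ‖Binv x₁ - Binv x₂‖
      ≤ 1 / μ * (L₂ * ((1 + L₁ / μ) * ‖x₁ - x₂‖)) * (1 / μ) := by
    rw [hBdiff]
    refine le_trans (ContinuousLinearMap.opNorm_comp_le _ _) ?_
    refine mul_le_mul ?_ (hB3 x₂) (norm_nonneg _) (by positivity)
    refine le_trans (ContinuousLinearMap.opNorm_comp_le _ _) ?_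
    refine mul_le_mul (hB3 x₁) ?_ (norm_nonneg _) (by positivity)
    rw [norm_sub_rev]
    exact hA12
  have hTdiff : ‖T x₁ - T x₂‖ ≤ L₂ / μ * (1 + L₁ / μ) * (1 + L₁ / μ) * ‖x₁ - x₂‖ := by
    have e7 : T x₁ - T x₂
        = -((Binv x₁).comp (Hxy g x₁ (ystar x₁) - Hxy g x₂ (ystar x₂))
            + (Binv x₁ - Binv x₂).comp (Hxy g x₂ (ystar x₂))) := by
      rw [hTdef]
      apply ContinuousLinearMap.ext
      intro v
      simp only [ContinuousLinearMap.sub_apply, ContinuousLinearMap.neg_apply,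
        ContinuousLinearMap.comp_apply, ContinuousLinearMap.add_apply, map_sub]
      abel
    rw [e7, norm_neg]
    refine le_trans (norm_add_le _ _) ?_
    have t1 : ‖(Binv x₁).comp (Hxy g x₁ (ystar x₁) - Hxy g x₂ (ystar x₂))‖
        ≤ 1 / μ * (L₂ * ((1 + L₁ / μ) * ‖x₁ - x₂‖)) :=
      le_trans (ContinuousLinearMap.opNorm_comp_le _ _)
        (mul_le_mul (hB3 x₁) hH12 (norm_nonneg _) (by positivity))
    have t2 : ‖(Binv x₁ - Binv x₂).comp (Hxy g x₂ (ystar x₂))‖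
        ≤ (1 / μ * (L₂ * ((1 + L₁ / μ) * ‖x₁ - x₂‖)) * (1 / μ)) * L₁ :=
      le_trans (ContinuousLinearMap.opNorm_comp_le _ _)
        (mul_le_mul hB12 (hHxnorm x₂ (ystar x₂)) (norm_nonneg _) (by positivity))
    have e8 : 1 / μ * (L₂ * ((1 + L₁ / μ) * ‖x₁ - x₂‖))
        + (1 / μ * (L₂ * ((1 + L₁ / μ) * ‖x₁ - x₂‖)) * (1 / μ)) * L₁
        = L₂ / μ * (1 + L₁ / μ) * (1 + L₁ / μ) * ‖x₁ - x₂‖ := by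
      field_simp
    linarith
  -- bound on ∂_y f
  have hsndf : ‖(fderiv ℝ f (jp x₂ (ystar x₂))).comp (inrL _ _)‖ ≤ L₀ := by
    rw [← fderiv_partial_right f (hf (jp x₂ (ystar x₂)))]
    apply norm_fderiv_le_of_lip_real hL₀.le
    intro a b
    rw [Real.norm_eq_abs]
    exact hLf x₂ a b
  -- splitting the difference of derivatives
  have hsplit2 : (fderiv ℝ f (jp x₁ (ystar x₁))).comp (J x₁)
      - (fderiv ℝ f (jp x₂ (ystar x₂))).comp (J x₂)
      = (fderiv ℝ f (jp x₁ (ystar x₁)) - fderiv ℝ f (jp x₂ (ystar x₂))).comp (J x₁)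
        + ((fderiv ℝ f (jp x₂ (ystar x₂))).comp (inrL _ _)).comp (T x₁ - T x₂) := by
    apply ContinuousLinearMap.ext
    intro v
    have e9 : J x₁ v - J x₂ v
        = inrL (EuclideanSpace ℝ (Fin dx)) (EuclideanSpace ℝ (Fin dy)) (T x₁ v - T x₂ v) := by
      rw [hJdef]
      simp only [ContinuousLinearMap.add_apply, ContinuousLinearMap.comp_apply,
        ContinuousLinearMap.sub_apply, map_sub]
      abel
    simp only [ContinuousLinearMap.sub_apply, ContinuousLinearMap.comp_apply,
      ContinuousLinearMap.add_apply]
    rw [← e9, map_sub]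
    ring
  rw [hsplit2]
  refine le_trans (norm_add_le _ _) ?_
  have u1 : ‖(fderiv ℝ f (jp x₁ (ystar x₁)) - fderiv ℝ f (jp x₂ (ystar x₂))).comp (J x₁)‖
      ≤ (L₁ * ((1 + L₁ / μ) * ‖x₁ - x₂‖)) * (1 + L₁ / μ) :=
    le_trans (ContinuousLinearMap.opNorm_comp_le _ _)
      (mul_le_mul hD12 hJnorm (norm_nonneg _) (by positivity))
  have u2 : ‖((fderiv ℝ f (jp x₂ (ystar x₂))).comp (inrL _ _)).comp (T x₁ - T x₂)‖
      ≤ L₀ * (L₂ / μ * (1 + L₁ / μ) * (1 + L₁ / μ) * ‖x₁ - x₂‖) :=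
    le_trans (ContinuousLinearMap.opNorm_comp_le _ _)
      (mul_le_mul hsndf hTdiff (norm_nonneg _) hL₀.le)
  -- final arithmetic
  have hL₁b : L₁ ≤ Lbar := by rw [hLbar]; exact le_max_of_le_right (le_max_left _ _)
  have hL₂b : L₂ ≤ Lbar := by rw [hLbar]; exact le_max_of_le_right (le_max_right _ _)
  have hL₀b : L₀ ≤ Lbar := by rw [hLbar]; exact le_max_left _ _
  have hLb0 : 0 < Lbar := lt_of_lt_of_le hL₁ hL₁b
  have hκ0 : 0 < κ := by rw [hκ]; positivity
  have hκ1 : 1 ≤ κ := by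
    rw [hκ, le_div_iff₀ hμ, one_mul]
    linarith
  have hkκ : L₁ / μ ≤ κ := by
    rw [hκ]
    gcongr
  have hL2κ : L₂ / μ ≤ κ := by
    rw [hκ]
    gcongr
  have h2κ : 1 + L₁ / μ ≤ 2 * κ := by linarith
  have hsq : (1 + L₁ / μ) * (1 + L₁ / μ) ≤ 2 * κ * (2 * κ) :=
    mul_le_mul h2κ h2κ (by positivity) (by positivity)
  have hcoeff : L₁ * ((1 + L₁ / μ) * (1 + L₁ / μ))
      + L₀ * (L₂ / μ * (1 + L₁ / μ) * (1 + L₁ / μ)) ≤ 100 * Lbar * κ ^ 3 := by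
    have c1 : L₁ * ((1 + L₁ / μ) * (1 + L₁ / μ)) ≤ Lbar * (2 * κ * (2 * κ)) :=
      mul_le_mul hL₁b hsq (by positivity) (le_of_lt hLb0)
    have c2 : L₂ / μ * (1 + L₁ / μ) * (1 + L₁ / μ) ≤ κ * (2 * κ * (2 * κ)) := by
      have := mul_le_mul hL2κ hsq (by positivity) (le_of_lt hκ0)
      calc L₂ / μ * (1 + L₁ / μ) * (1 + L₁ / μ)
          = L₂ / μ * ((1 + L₁ / μ) * (1 + L₁ / μ)) := by ring
        _ ≤ κ * (2 * κ * (2 * κ)) := this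
    have c3 : L₀ * (L₂ / μ * (1 + L₁ / μ) * (1 + L₁ / μ)) ≤ Lbar * (κ * (2 * κ * (2 * κ))) :=
      mul_le_mul hL₀b c2 (by positivity) (le_of_lt hLb0)
    have hκ23 : κ ^ 2 ≤ κ ^ 3 := by
      calc κ ^ 2 = κ ^ 2 * 1 := by ring
        _ ≤ κ ^ 2 * κ := mul_le_mul_of_nonneg_left hκ1 (by positivity)
        _ = κ ^ 3 := by ring
    have c4 : Lbar * (2 * κ * (2 * κ)) ≤ 4 * Lbar * κ ^ 3 := by
      calc Lbar * (2 * κ * (2 * κ)) = 4 * Lbar * κ ^ 2 := by ring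
        _ ≤ 4 * Lbar * κ ^ 3 := by
            calc 4 * Lbar * κ ^ 2 = (4 * Lbar) * κ ^ 2 := by ring
              _ ≤ (4 * Lbar) * κ ^ 3 := mul_le_mul_of_nonneg_left hκ23 (by positivity)
              _ = 4 * Lbar * κ ^ 3 := by ring
    have c5 : Lbar * (κ * (2 * κ * (2 * κ))) = 4 * Lbar * κ ^ 3 := by ring
    have hpos : (0:ℝ) ≤ Lbar * κ ^ 3 := by positivity
    nlinarith [c1, c3, c4, c5, hpos]
  have hnn : (0:ℝ) ≤ ‖x₁ - x₂‖ := norm_nonneg _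
  have u3 := mul_le_mul_of_nonneg_right hcoeff hnn
  have e10 : (L₁ * ((1 + L₁ / μ) * (1 + L₁ / μ))
      + L₀ * (L₂ / μ * (1 + L₁ / μ) * (1 + L₁ / μ))) * ‖x₁ - x₂‖
      = (L₁ * ((1 + L₁ / μ) * ‖x₁ - x₂‖)) * (1 + L₁ / μ)
        + L₀ * (L₂ / μ * (1 + L₁ / μ) * (1 + L₁ / μ) * ‖x₁ - x₂‖) := by ring
  rw [e10] at u3
  have e11 : 100 * Lbar * κ ^ 3 * ‖x₁ - x₂‖ = 100 * Lbar * κ ^ 3 * ‖x₁ - x₂‖ := rfl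
  linarith [u1, u2, u3]
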